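/- The eigenvalue λ₁(ρ, υ) = υ - ρ p'(ρ), restricted to the integral curve υ + p(ρ) = const, is strictly decreasing in ρ: its derivative along the curve equals -(Γ² + Γ)Aρ^(Γ-1)/(1-aρ)^(Γ+2) + (κ² - κ)B/ρ^(κ+1), which is negative for all ρ ∈ (0, 1/a). -/

import Mathlib

open Real

theorem lambda1_genuinely_nonlinear
    (A B a Γ κ C : ℝ) (hA : 0 < A) (hB : 0 < B) (ha : 0 < a)
    (hΓ : 1 ≤ Γ ∧ Γ ≤ 3) (hκ : 0 < κ ∧ κ ≤ 1)
    (p p' : ℝ → ℝ)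
    (hp : ∀ ρ : ℝ, p ρ = A * (ρ / (1 - a * ρ)) ^ Γ - B / ρ ^ κ)
    (hp' : ∀ ρ : ℝ, p' ρ = Γ * A * ρ ^ (Γ - 1) / (1 - a * ρ) ^ (Γ + 1) + κ * B / ρ ^ (κ + 1))
    (ρ : ℝ) (hρ : 0 < ρ) (hρa : ρ < 1 / a) :
    HasDerivAt (fun ρ : ℝ => (C - p ρ) - ρ * p' ρ)
      (-((Γ ^ 2 + Γ) * A * ρ ^ (Γ - 1) / (1 - a * ρ) ^ (Γ + 2)) + (κ ^ 2 - κ) * B / ρ ^ (κ + 1)) ρ ∧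
    -((Γ ^ 2 + Γ) * A * ρ ^ (Γ - 1) / (1 - a * ρ) ^ (Γ + 2)) + (κ ^ 2 - κ) * B / ρ ^ (κ + 1) < 0 := by
  have hs : 0 < 1 - a * ρ := by
    have h := mul_lt_mul_of_pos_left hρa ha
    rw [mul_one_div, div_self ha.ne'] at h
    linarith
  -- derivative of the inner affine map
  have hS : HasDerivAt (fun x : ℝ => 1 - a * x) (-a) ρ := by
    simpa using ((hasDerivAt_id ρ).const_mul a).const_sub (1:ℝ)
  have h1 : HasDerivAt (fun x : ℝ => x ^ Γ) (Γ * ρ ^ (Γ - 1)) ρ :=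
    Real.hasDerivAt_rpow_const (Or.inl hρ.ne')
  have h2 : HasDerivAt (fun x : ℝ => (1 - a * x) ^ (-Γ))
      (-a * -Γ * (1 - a * ρ) ^ (-Γ - 1)) ρ := hS.rpow_const (Or.inl hs.ne')
  have h3 : HasDerivAt (fun x : ℝ => x ^ (-κ)) (-κ * ρ ^ (-κ - 1)) ρ :=
    Real.hasDerivAt_rpow_const (Or.inl hρ.ne')
  have h4 : HasDerivAt (fun x : ℝ => x ^ (Γ - 1)) ((Γ - 1) * ρ ^ (Γ - 1 - 1)) ρ :=
    Real.hasDerivAt_rpow_const (Or.inl hρ.ne')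
  have h5 : HasDerivAt (fun x : ℝ => (1 - a * x) ^ (-(Γ + 1)))
      (-a * -(Γ + 1) * (1 - a * ρ) ^ (-(Γ + 1) - 1)) ρ := hS.rpow_const (Or.inl hs.ne')
  have h6 : HasDerivAt (fun x : ℝ => x ^ (-(κ + 1))) (-(κ + 1) * ρ ^ (-(κ + 1) - 1)) ρ :=
    Real.hasDerivAt_rpow_const (Or.inl hρ.ne')
  have hg : HasDerivAt (fun x : ℝ =>
      (C - (A * x ^ Γ * (1 - a * x) ^ (-Γ) - B * x ^ (-κ))) -
        x * (Γ * A * (x ^ (Γ - 1) * (1 - a * x) ^ (-(Γ + 1))) + κ * B * x ^ (-(κ + 1))))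
      (((0 : ℝ) - ((A * (Γ * ρ ^ (Γ - 1)) * (1 - a * ρ) ^ (-Γ) +
            A * ρ ^ Γ * (-a * -Γ * (1 - a * ρ) ^ (-Γ - 1))) - B * (-κ * ρ ^ (-κ - 1)))) -
        (1 * (Γ * A * (ρ ^ (Γ - 1) * (1 - a * ρ) ^ (-(Γ + 1))) + κ * B * ρ ^ (-(κ + 1))) +
          ρ * (Γ * A * ((Γ - 1) * ρ ^ (Γ - 1 - 1) * (1 - a * ρ) ^ (-(Γ + 1)) +
              ρ ^ (Γ - 1) * (-a * -(Γ + 1) * (1 - a * ρ) ^ (-(Γ + 1) - 1))) +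
            κ * B * (-(κ + 1) * ρ ^ (-(κ + 1) - 1))))) ρ := by
    exact ((hasDerivAt_const ρ C).sub (((h1.const_mul A).mul h2).sub (h3.const_mul B))).sub
      ((hasDerivAt_id ρ).mul (((h4.mul h5).const_mul (Γ * A)).add (h6.const_mul (κ * B))))
  have hfg : (fun x : ℝ => (C - p x) - x * p' x) =ᶠ[nhds ρ] (fun x : ℝ =>
      (C - (A * x ^ Γ * (1 - a * x) ^ (-Γ) - B * x ^ (-κ))) -
        x * (Γ * A * (x ^ (Γ - 1) * (1 - a * x) ^ (-(Γ + 1))) + κ * B * x ^ (-(κ + 1)))) := by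
    have hmem : Set.Ioo (0:ℝ) (1/a) ∈ nhds ρ := Ioo_mem_nhds hρ hρa
    filter_upwards [hmem] with x hx
    obtain ⟨hx0, hx1⟩ := hx
    have hsx : 0 < 1 - a * x := by
      have h := mul_lt_mul_of_pos_left hx1 ha
      rw [mul_one_div, div_self ha.ne'] at h
      linarith
    have e1 : (0:ℝ) < x ^ κ := Real.rpow_pos_of_pos hx0 κ
    have e2 : (0:ℝ) < x ^ (κ + 1) := Real.rpow_pos_of_pos hx0 (κ + 1)
    have e3 : (0:ℝ) < (1 - a * x) ^ Γ := Real.rpow_pos_of_pos hsx Γ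
    have e4 : (0:ℝ) < (1 - a * x) ^ (Γ + 1) := Real.rpow_pos_of_pos hsx (Γ + 1)
    rw [hp, hp', Real.div_rpow hx0.le hsx.le, Real.rpow_neg hsx.le Γ,
      Real.rpow_neg hsx.le (Γ + 1), Real.rpow_neg hx0.le κ, Real.rpow_neg hx0.le (κ + 1)]
    field_simp
  refine ⟨?_, ?_⟩
  · have hf := hg.congr_of_eventuallyEq hfg
    refine hf.congr_deriv ?_
    have r1 : ρ ^ Γ = ρ ^ (Γ - 1 - 1) * ρ * ρ := by
      rw [← Real.rpow_add_one hρ.ne' (Γ - 1 - 1), ← Real.rpow_add_one hρ.ne']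
      congr 1; ring
    have r2 : ρ ^ (Γ - 1) = ρ ^ (Γ - 1 - 1) * ρ := by
      rw [← Real.rpow_add_one hρ.ne' (Γ - 1 - 1)]; congr 1; ring
    have r3 : (1 - a * ρ) ^ (-Γ) = (1 - a * ρ) ^ (-(Γ + 2)) * (1 - a * ρ) * (1 - a * ρ) := by
      rw [← Real.rpow_add_one hs.ne' (-(Γ + 2)), ← Real.rpow_add_one hs.ne']
      congr 1; ring
    have r4 : (1 - a * ρ) ^ (-Γ - 1) = (1 - a * ρ) ^ (-(Γ + 2)) * (1 - a * ρ) := by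
      rw [← Real.rpow_add_one hs.ne' (-(Γ + 2))]; congr 1; ring
    have r5 : (1 - a * ρ) ^ (-(Γ + 1)) = (1 - a * ρ) ^ (-(Γ + 2)) * (1 - a * ρ) := by
      rw [← Real.rpow_add_one hs.ne' (-(Γ + 2))]; congr 1; ring
    have r6 : (1 - a * ρ) ^ (-(Γ + 1) - 1) = (1 - a * ρ) ^ (-(Γ + 2)) := by
      congr 1; ring
    have r7 : ρ ^ (-κ - 1) = ρ ^ (-(κ + 1) - 1) * ρ := by
      rw [← Real.rpow_add_one hρ.ne' (-(κ + 1) - 1)]; congr 1; ring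
    have r9 : ρ ^ (-(κ + 1)) = ρ ^ (-(κ + 1) - 1) * ρ := by
      rw [← Real.rpow_add_one hρ.ne' (-(κ + 1) - 1)]; congr 1; ring
    have t1 : (Γ ^ 2 + Γ) * A * ρ ^ (Γ - 1) / (1 - a * ρ) ^ (Γ + 2)
        = (Γ ^ 2 + Γ) * A * ρ ^ (Γ - 1) * (1 - a * ρ) ^ (-(Γ + 2)) := by
      rw [Real.rpow_neg hs.le, div_eq_mul_inv]
    have t2 : (κ ^ 2 - κ) * B / ρ ^ (κ + 1) = (κ ^ 2 - κ) * B * ρ ^ (-(κ + 1)) := by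
      rw [Real.rpow_neg hρ.le, div_eq_mul_inv]
    rw [t1, t2]
    simp only [r1, r2, r3, r4, r5, r6, r7, r9]
    ring
  · have hΓ1 : (1:ℝ) ≤ Γ := hΓ.1
    have hΓpos : 0 < Γ ^ 2 + Γ := by nlinarith
    have hpos : 0 < (Γ ^ 2 + Γ) * A * ρ ^ (Γ - 1) / (1 - a * ρ) ^ (Γ + 2) :=
      div_pos (mul_pos (mul_pos hΓpos hA) (Real.rpow_pos_of_pos hρ _))
        (Real.rpow_pos_of_pos hs _)
    have hκ0 : κ ^ 2 - κ ≤ 0 := by nlinarith [hκ.1, hκ.2]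
    have hκ2 : (κ ^ 2 - κ) * B ≤ 0 := mul_nonpos_of_nonpos_of_nonneg hκ0 hB.le
    have hnp : (κ ^ 2 - κ) * B / ρ ^ (κ + 1) ≤ 0 :=
      div_nonpos_of_nonpos_of_nonneg hκ2 (Real.rpow_pos_of_pos hρ _).le
    linarith
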